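/- In particular (case s = n−2 of the preceding setup), the second-degree polynomial p^{(n−2)} obtained from the step-data interpolation polynomial has strictly positive discriminant, i.e., if p^{(n−2)}(w) = Aw² + Bw + C then B² − 4AC > 0. -/

import Mathlib

open Polynomial

/-- The quadratic `(n-2)`-th derivative of the step-data interpolation polynomial
has strictly positive discriminant. -/
theorem step_interpolation_discriminant_pos
    (n : ℕ) (hn : 3 ≤ n) (x : Fin (n + 1) → ℝ) (hx : StrictMono x)
    (i₀ : ℕ) (hi₀ : i₀ ≤ n - 1) (fL fR : ℝ) (hf : fL ≠ fR)
    (p : Polynomial ℝ) (hdeg : p.natDegree ≤ n)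
    (hp : ∀ i : Fin (n + 1), p.eval (x i) = if (i : ℕ) ≤ i₀ then fL else fR)
    (A B C : ℝ)
    (hA : A = (Polynomial.derivative^[n - 2] p).coeff 2)
    (hB : B = (Polynomial.derivative^[n - 2] p).coeff 1)
    (hC : C = (Polynomial.derivative^[n - 2] p).coeff 0) :
    B ^ 2 - 4 * A * C > 0 := by
  have hi₀n : i₀ < n := by omega
  -- the derivative of `p` is nonzero
  have hp'ne : derivative p ≠ 0 := by
    intro h0
    obtain ⟨a, ha⟩ := Polynomial.natDegree_eq_zero.mp
      (Polynomial.natDegree_eq_zero_of_derivative_eq_zero h0)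
    have h1 := hp 0
    have h2 := hp (Fin.last n)
    rw [← ha, Polynomial.eval_C] at h1 h2
    simp only [Fin.val_zero, Fin.val_last] at h1 h2
    simp only [Nat.zero_le, ↓reduceIte] at h1
    rw [if_neg (by omega)] at h2
    exact hf (h1 ▸ h2)
  -- Rolle: a root of `derivative p` in each interval except the `i₀`-th
  have hroots : ∀ i : Fin n, ∃ c, (i : ℕ) ≠ i₀ →
      c ∈ Set.Ioo (x i.castSucc) (x i.succ) ∧ (derivative p).eval c = 0 := by
    intro i
    by_cases h : (i : ℕ) ≠ i₀
    · have hlt : x i.castSucc < x i.succ := hx (Fin.castSucc_lt_succ (i := i))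
      have heq : p.eval (x i.castSucc) = p.eval (x i.succ) := by
        rw [hp, hp]
        simp only [Fin.coe_castSucc, Fin.val_succ]
        split_ifs with h1 h2 <;> first | rfl | omega
      obtain ⟨c, hc, hc0⟩ := exists_deriv_eq_zero hlt
        ((p.continuous).continuousOn) heq
      exact ⟨c, fun _ => ⟨hc, by rwa [Polynomial.deriv] at hc0⟩⟩
    · exact ⟨0, fun h' => absurd h' h⟩
  choose c hc using hroots
  -- the chosen roots are strictly increasing on indices ≠ i₀
  have hmono : ∀ i j : Fin n, (i : ℕ) ≠ i₀ → (j : ℕ) ≠ i₀ → i < j → c i < c j := by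
    intro i j hi hj hij
    have h1 := (hc i hi).1
    have h2 := (hc j hj).1
    have hle : x i.succ ≤ x j.castSucc := hx.monotone (by
      simp [Fin.le_def, Fin.val_succ, Fin.coe_castSucc]; omega)
    exact lt_of_lt_of_le h1.2 (le_trans hle (le_of_lt h2.1))
  -- the `n-1` distinct roots give a lower bound on the root count
  set S : Finset ℝ :=
    (Finset.univ.filter fun i : Fin n => (i : ℕ) ≠ i₀).image c with hS
  have hinj : Set.InjOn c ↑(Finset.univ.filter fun i : Fin n => (i : ℕ) ≠ i₀) := by
    intro i hi j hj hij
    simp only [Finset.coe_filter, Set.mem_setOf_eq] at hi hj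
    rcases lt_trichotomy i j with h | h | h
    · exact absurd hij (ne_of_lt (hmono i j hi.2 hj.2 h))
    · exact h
    · exact absurd hij.symm (ne_of_lt (hmono j i hj.2 hi.2 h))
  have hfiltercard : (Finset.univ.filter fun i : Fin n => (i : ℕ) ≠ i₀).card = n - 1 := by
    have : (Finset.univ.filter fun i : Fin n => (i : ℕ) ≠ i₀)
        = Finset.univ.erase ⟨i₀, hi₀n⟩ := by
      ext j
      simp [Finset.mem_erase, Fin.ext_iff]
    rw [this, Finset.card_erase_of_mem (Finset.mem_univ _), Finset.card_univ, Fintype.card_fin]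
  have hScard : S.card = n - 1 := by
    rw [hS, Finset.card_image_of_injOn hinj, hfiltercard]
  have hSsub : S ⊆ (derivative p).roots.toFinset := by
    intro a ha
    rw [hS] at ha
    obtain ⟨i, hi, rfl⟩ := Finset.mem_image.mp ha
    rw [Finset.mem_filter] at hi
    rw [Multiset.mem_toFinset, Polynomial.mem_roots hp'ne]
    exact (hc i hi.2).2
  have hcard1 : n - 1 ≤ (derivative p).roots.toFinset.card := by
    rw [← hScard]; exact Finset.card_le_card hSsub
  -- iterate the Rolle-type bound on distinct root counts
  have key : ∀ k : ℕ, (derivative p).roots.toFinset.card ≤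
      (derivative^[k] (derivative p)).roots.toFinset.card + k := by
    intro k
    induction k with
    | zero => simp
    | succ m ih =>
      refine ih.trans ?_
      rw [Function.iterate_succ_apply']
      have := Polynomial.card_roots_toFinset_le_derivative (derivative^[m] (derivative p))
      omega
  have hiter : derivative^[n - 3] (derivative p) = derivative^[n - 2] p := by
    rw [← Function.iterate_succ_apply]
    congr 1
    omega
  set q : Polynomial ℝ := derivative^[n - 2] p with hq
  have hq2 : 2 ≤ q.roots.toFinset.card := by
    have h := key (n - 3)
    rw [hiter] at h
    omega
  have hqne : q ≠ 0 := by
    intro h0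
    rw [h0] at hq2
    simp at hq2
  have hqdeg : q.natDegree ≤ 2 := by
    have h := Polynomial.natDegree_iterate_derivative p (n - 2)
    rw [← hq] at h
    omega
  have hqdeg2 : q.natDegree = 2 := by
    have h1 := Multiset.toFinset_card_le q.roots
    have h2 := Polynomial.card_roots' q
    omega
  have hAne : A ≠ 0 := by
    rw [hA, ← hqdeg2]
    exact Polynomial.leadingCoeff_ne_zero.mpr hqne
  -- get two distinct roots
  obtain ⟨r, hr, s, hs, hrs⟩ := Finset.one_lt_card.mp (by omega : 1 < q.roots.toFinset.card)
  have hr' : q.eval r = 0 := (Polynomial.mem_roots hqne).mp (Multiset.mem_toFinset.mp hr)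
  have hs' : q.eval s = 0 := (Polynomial.mem_roots hqne).mp (Multiset.mem_toFinset.mp hs)
  have heval : ∀ t : ℝ, q.eval t = A * t ^ 2 + B * t + C := by
    intro t
    rw [Polynomial.eval_eq_sum_range' (by omega : q.natDegree < 3)]
    rw [hA, hB, hC]
    simp [Finset.sum_range_succ]
    ring
  rw [heval] at hr' hs'
  have hsub : r - s ≠ 0 := sub_ne_zero.mpr hrs
  have h1 : A * (r + s) + B = 0 := by
    rcases mul_eq_zero.mp (show (A * (r + s) + B) * (r - s) = 0 by
      linear_combination hr' - hs') with h | h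
    · exact h
    · exact absurd h hsub
  have h3 : C = A * r * s := by linear_combination hr' - r * h1
  have hB' : B = -(A * (r + s)) := by linarith
  have hkey : B ^ 2 - 4 * A * C = (A * (r - s)) ^ 2 := by
    rw [hB', h3]; ring
  rw [hkey]
  exact sq_pos_of_ne_zero (mul_ne_zero hAne hsub)
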